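/- On a complex Hermitian manifold (X, ω) of dimension n with a Hermitian metric ρ, for every (p,q)-form u with ∂̄*_ρ u = 0, one has Λ_ρ(i∂∂̄ u) = i∂∂̄ Λ_ρ u − Δ''_ρ u + ∂∂*_ρ u + ∂τ*_ρ u − τ̄*_ρ ∂̄ u, where τ_ρ = [Λ_ρ, ∂ρ ∧ ·] is the torsion operator and Δ''_ρ = ∂̄∂̄*_ρ + ∂̄*_ρ∂̄. -/
import Mathlib


/-- The Hermitian version of Lemma 3.1, stated abstractly: on the space of smooth
forms of a Hermitian manifold `(X, ρ)` let `pd = ∂`, `pdb = ∂̄`, `pds = ∂*_ρ`,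
`pdbs = ∂̄*_ρ`, `taus = τ*_ρ`, `taubs = τ̄*_ρ` and `Lam = Λ_ρ`.  Demailly's
Hermitian commutation relations read `[Λ_ρ, ∂̄] = −i(∂*_ρ + τ*_ρ)` and
`[Λ_ρ, ∂] = i(∂̄*_ρ + τ̄*_ρ)`.  Then for every form `u` with `∂̄*_ρ u = 0`:
`Λ_ρ(i∂∂̄u) = i∂∂̄Λ_ρ u − Δ''_ρ u + ∂∂*_ρ u + ∂τ*_ρ u − τ̄*_ρ ∂̄ u`,
where `Δ''_ρ u = (∂̄∂̄*_ρ + ∂̄*_ρ∂̄) u`. -/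
theorem stmt_5 {M : Type*} [AddCommGroup M] [Module ℂ M]
    (Lam pd pdb pds pdbs taus taubs : Module.End ℂ M)
    (hcomm1 : Lam * pdb - pdb * Lam = (-Complex.I) • (pds + taus))
    (hcomm2 : Lam * pd - pd * Lam = Complex.I • (pdbs + taubs))
    (u : M) (hu : pdbs u = 0) :
    Lam (Complex.I • pd (pdb u)) =
      Complex.I • pd (pdb (Lam u)) - (pdb (pdbs u) + pdbs (pdb u))
        + pd (pds u) + pd (taus u) - taubs (pdb u) := by
  have h1 : Lam (pdb u) - pdb (Lam u) = (-Complex.I) • (pds u + taus u) := by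
    have := congrArg (fun f : Module.End ℂ M => f u) hcomm1
    simpa using this
  have h2 : Lam (pd (pdb u)) - pd (Lam (pdb u)) =
      Complex.I • (pdbs (pdb u) + taubs (pdb u)) := by
    have := congrArg (fun f : Module.End ℂ M => f (pdb u)) hcomm2
    simpa using this
  have hL : Lam (pdb u) = pdb (Lam u) + (-Complex.I) • (pds u + taus u) := by
    linear_combination (norm := module) h1
  have key : Lam (pd (pdb u)) = pd (pdb (Lam u)) +
      (-Complex.I) • (pd (pds u) + pd (taus u)) +
      Complex.I • (pdbs (pdb u) + taubs (pdb u)) := by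
    have h3 : pd (Lam (pdb u)) = pd (pdb (Lam u)) +
        (-Complex.I) • (pd (pds u) + pd (taus u)) := by
      rw [hL]; simp [map_add, map_smul]
    linear_combination (norm := module) h2 + h3
  rw [map_smul, key, hu, map_zero]
  have : Complex.I • (Complex.I : ℂ) = -1 := by simp [smul_eq_mul, Complex.I_mul_I]
  simp only [smul_add, smul_sub, smul_smul, Complex.I_mul_I, 
    mul_neg, Complex.I_mul_I, neg_smul, one_smul, smul_neg]
  module
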